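/- Fix δ > 0 and x ∈ ℝ with |x| < δ. If r is uniformly distributed on [-δ/2, δ/2) and Q_{r,δ}(x) = δ⌊(x - r)/δ⌉ + r, then P[Q_{r,δ}(x) = r] = 1 - |x|/δ. -/

import Mathlib

open MeasureTheory

/-- For `|x| < δ` and `r` uniform on `[-δ/2, δ/2)`, the probability that
`Q_{r,δ}(x) = δ⌊(x - r)/δ⌉ + r` equals `r` (i.e. `x` rounds to the zero lattice point of
the shifted grid) is `1 - |x|/δ`. -/
theorem prob_round_to_shift (δ x : ℝ) (hδ : 0 < δ) (hx : |x| < δ) :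
    (volume {r ∈ Set.Ico (-δ/2) (δ/2) |
        δ * ((round ((x - r) / δ) : ℤ) : ℝ) + r = r}).toReal / δ
      = 1 - |x| / δ := by
  have hδ' : δ ≠ 0 := hδ.ne'
  have hset : {r ∈ Set.Ico (-δ/2) (δ/2) |
        δ * ((round ((x - r) / δ) : ℤ) : ℝ) + r = r}
      = Set.Ico (-δ/2) (δ/2) ∩ Set.Ioc (x - δ/2) (x + δ/2) := by
    ext r
    simp only [Set.mem_setOf_eq, Set.mem_inter_iff, Set.mem_Ico, Set.mem_Ioc]
    have key : δ * ((round ((x - r) / δ) : ℤ) : ℝ) + r = r ↔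
        (x - δ/2 < r ∧ r ≤ x + δ/2) := by
      rw [add_eq_right, mul_eq_zero]
      have hc : ((round ((x - r) / δ) : ℤ) : ℝ) = 0 ↔ round ((x - r) / δ) = 0 :=
        Int.cast_eq_zero
      rw [or_iff_right hδ', hc, round_eq_zero_iff, Set.mem_Ico,
        div_lt_iff₀ hδ, le_div_iff₀ hδ]
      constructor <;> intro h <;> exact ⟨by linarith [h.1, h.2], by linarith [h.1, h.2]⟩
    rw [key]
  rw [hset]
  rcases abs_cases x with ⟨hax, hx0⟩ | ⟨hax, hx0⟩
  · have h2 : Set.Ico (-δ/2) (δ/2) ∩ Set.Ioc (x - δ/2) (x + δ/2)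
        = Set.Ioo (x - δ/2) (δ/2) := by
      ext r
      simp only [Set.mem_inter_iff, Set.mem_Ico, Set.mem_Ioc, Set.mem_Ioo]
      constructor
      · rintro ⟨⟨_, h2⟩, ⟨h3, _⟩⟩; exact ⟨h3, h2⟩
      · rintro ⟨h1, h2⟩; exact ⟨⟨by linarith, h2⟩, ⟨h1, by linarith⟩⟩
    rw [h2, Real.volume_Ioo, hax, ENNReal.toReal_ofReal (by linarith)]
    field_simp
    ring
  · have h2 : Set.Ico (-δ/2) (δ/2) ∩ Set.Ioc (x - δ/2) (x + δ/2)
        = Set.Icc (-δ/2) (x + δ/2) := by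
      ext r
      simp only [Set.mem_inter_iff, Set.mem_Ico, Set.mem_Ioc, Set.mem_Icc]
      constructor
      · rintro ⟨⟨h1, _⟩, ⟨_, h4⟩⟩; exact ⟨h1, h4⟩
      · rintro ⟨h1, h2⟩; exact ⟨⟨h1, by linarith⟩, ⟨by linarith, h2⟩⟩
    rw [h2, Real.volume_Icc, hax, ENNReal.toReal_ofReal (by linarith [abs_lt.mp hx])]
    field_simp
    ring
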